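/- Let w : D → ℝ be L-Lipschitz on an open set D ⊂ ℝ², let ε > 0 and c ∈ (0, 1/4]. Let I ⊂ [δ, r] be a set of radii with 𝓛¹(I) > r/2, and for each t ∈ I let x_t ∈ ∂B_t(0) satisfy w(x_t) = ε/2. Then there exists d > 0 depending only on L and c (not on ε) such that B_{dε}(x_t) ⊂ {x : cε ≤ w(x) ≤ (1−c)ε} for every t ∈ I, and 𝓛²( ⋃_{t∈I} B_{dε}(x_t) ) ≥ r d ε / 4, provided the balls B_{dε}(x_t) are contained in D. -/

import Mathlib

open MeasureTheory Metric Set Filter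
open scoped Topology ENNReal NNReal RealInnerProductSpace

noncomputable section

abbrev En (n : ℕ) := EuclideanSpace ℝ (Fin n)

/-- The Laplacian of a scalar function, as the sum of second partial derivatives. -/
def lap {n : ℕ} (u : En n → ℝ) (x : En n) : ℝ :=
  ∑ i, fderiv ℝ (fun y => fderiv ℝ u y (EuclideanSpace.single i 1)) x
    (EuclideanSpace.single i 1)

/-- The divergence of a vector field. -/
def dvg {n : ℕ} (φ : En n → En n) (x : En n) : ℝ :=
  ∑ i, fderiv ℝ (fun y => φ y i) x (EuclideanSpace.single i 1)

lemma ball_vol_lb (x : En 2) (a : ℝ) (ha : 0 < a) :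
    ENNReal.ofReal (2 * a ^ 2) ≤ volume (ball x a) := by
  rw [EuclideanSpace.volume_ball]
  simp only [Fintype.card_fin]
  rw [← ENNReal.ofReal_pow ha.le, ← ENNReal.ofReal_mul (by positivity)]
  apply ENNReal.ofReal_le_ofReal
  rw [Real.sq_sqrt Real.pi_pos.le]
  have : Real.Gamma ((2:ℕ) / 2 + 1) = 1 := by norm_num [Real.Gamma_two]
  rw [this]
  nlinarith [Real.pi_gt_three, sq_nonneg a]

/-- Measure estimate from Lemma 4.5: for an `L`-Lipschitz function `w` on an open
`D ⊆ ℝ²` and points `x_t ∈ ∂B_t` with `w(x_t) = ε/2` for `t` in a set `I ⊆ [δ, r]` of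
measure `> r/2`, there is `d > 0` depending only on `L` and `c` such that (provided the
balls lie in `D`) each ball `B_{dε}(x_t)` is contained in the band
`{cε ≤ w ≤ (1−c)ε}` and the union of these balls has area at least `r d ε / 4`. -/
theorem stmt6 (L : NNReal) (c : ℝ) (hc : 0 < c) (hc4 : c ≤ 1 / 4) :
    ∃ d : ℝ, 0 < d ∧
      ∀ (D : Set (En 2)) (w : En 2 → ℝ) (ε δ r : ℝ) (I : Set ℝ) (x : ℝ → En 2),
        IsOpen D → LipschitzOnWith L w D →
        0 < ε → 0 < δ → δ < r →
        MeasurableSet I → I ⊆ Icc δ r →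
        ENNReal.ofReal (r / 2) < volume I →
        (∀ t ∈ I, x t ∈ sphere (0 : En 2) t ∧ w (x t) = ε / 2) →
        (∀ t ∈ I, ball (x t) (d * ε) ⊆ D) →
        (∀ t ∈ I, ball (x t) (d * ε) ⊆ {y : En 2 | c * ε ≤ w y ∧ w y ≤ (1 - c) * ε}) ∧
          ENNReal.ofReal (r * d * ε / 4) ≤ volume (⋃ t ∈ I, ball (x t) (d * ε)) := by
  have hL0 : (0:ℝ) ≤ (L:ℝ) := L.coe_nonneg
  refine ⟨1 / (8 * ((L:ℝ) + 1)), by positivity, ?_⟩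
  intro D w ε δ r I x hD hw hε hδ hδr hImeas hIcc hIvol hxt hballD
  classical
  set d : ℝ := 1 / (8 * ((L:ℝ) + 1)) with hd
  have hdpos : 0 < d := by positivity
  set a : ℝ := d * ε with ha'
  have ha : 0 < a := by positivity
  have hr : 0 < r := lt_trans hδ hδr
  have hLd : (L:ℝ) * d ≤ 1 / 8 := by
    rw [hd, mul_one_div, div_le_div_iff₀ (by positivity) (by norm_num)]
    nlinarith
  -- band containment
  have band : ∀ t ∈ I, ball (x t) (d * ε) ⊆ {y : En 2 | c * ε ≤ w y ∧ w y ≤ (1 - c) * ε} := by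
    intro t ht y hy
    have hxD : x t ∈ D := hballD t ht (mem_ball_self ha)
    have hyD : y ∈ D := hballD t ht hy
    have hdist : dist (w y) (w (x t)) ≤ (L:ℝ) * (d * ε) := by
      refine le_trans (hw.dist_le_mul y hyD (x t) hxD) ?_
      exact mul_le_mul_of_nonneg_left (le_of_lt (mem_ball.mp hy)) hL0
    rw [(hxt t ht).2, Real.dist_eq] at hdist
    have h8 : (L:ℝ) * (d * ε) ≤ ε / 8 := by
      rw [← mul_assoc]; nlinarith
    rw [abs_le] at hdist
    constructor <;> nlinarith [hdist.1, hdist.2]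
  refine ⟨band, ?_⟩
  -- radial coordinate
  have hnorm : ∀ t ∈ I, ‖x t‖ = t := by
    intro t ht
    have := (hxt t ht).1
    rwa [mem_sphere_iff_norm, sub_zero] at this
  set f : ℝ → ℤ := fun t => ⌊(t - δ) / (2 * a)⌋ with hf
  have hcell : ∀ t : ℝ, δ + 2 * a * (f t) ≤ t ∧ t < δ + 2 * a * (f t) + 2 * a := by
    intro t
    have h1 := Int.floor_le ((t - δ) / (2 * a))
    have h2 := Int.lt_floor_add_one ((t - δ) / (2 * a))
    rw [le_div_iff₀ (by positivity)] at h1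
    rw [div_lt_iff₀ (by positivity)] at h2
    constructor <;> nlinarith
  obtain ⟨k, hk⟩ : ∃ k : ℤ, ENNReal.ofReal (r / 4) < volume (I ∩ f ⁻¹' {n | n % 2 = k}) := by
    by_contra h
    push_neg at h
    have hsub : I ⊆ (I ∩ f ⁻¹' {n | n % 2 = 0}) ∪ (I ∩ f ⁻¹' {n | n % 2 = 1}) := by
      intro t ht
      rcases Int.even_or_odd (f t) with he | ho
      · exact Or.inl ⟨ht, by obtain ⟨m, hm⟩ := he; simp [hm] <;> omega⟩
      · exact Or.inr ⟨ht, by obtain ⟨m, hm⟩ := ho; simp [hm] <;> omega⟩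
    have h1 : volume I ≤ ENNReal.ofReal (r / 4) + ENNReal.ofReal (r / 4) :=
      le_trans (measure_mono hsub) (le_trans (measure_union_le _ _) (add_le_add (h 0) (h 1)))
    rw [← ENNReal.ofReal_add (by positivity) (by positivity)] at h1
    have : r / 4 + r / 4 = r / 2 := by ring
    rw [this] at h1
    exact absurd (lt_of_lt_of_le hIvol h1) (lt_irrefl _)
  set J : Set ℝ := I ∩ f ⁻¹' {n | n % 2 = k} with hJ
  -- separation within J for distinct floor values
  have hsep : ∀ s ∈ J, ∀ t ∈ J, f s ≠ f t → 2 * a ≤ |s - t| := by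
    intro s hs t ht hne
    have hps : f s % 2 = k := hs.2
    have hpt : f t % 2 = k := ht.2
    rcases lt_or_gt_of_ne hne with hlt | hlt
    · have h2 : f s + 2 ≤ f t := by omega
      have hs2 := (hcell s).2
      have ht1 := (hcell t).1
      have : 2 * a ≤ t - s := by
        have : (f s : ℝ) + 2 ≤ (f t : ℝ) := by exact_mod_cast h2
        nlinarith
      rw [abs_sub_comm, abs_of_nonneg (by linarith)]
      linarith
    · have h2 : f t + 2 ≤ f s := by omega
      have ht2 := (hcell t).2
      have hs1 := (hcell s).1
      have : 2 * a ≤ s - t := by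
        have : (f t : ℝ) + 2 ≤ (f s : ℝ) := by exact_mod_cast h2
        nlinarith
      rw [abs_of_nonneg (by linarith)]
      linarith
  set S : Set ℤ := f '' J with hS
  have hSc : S.Countable := S.to_countable
  have hrep : ∀ n ∈ S, ∃ t, t ∈ J ∧ f t = n := fun n hn => hn
  choose g hgJ hgf using hrep
  set y : ℤ → ℝ := fun n => if h : n ∈ S then g n h else 0 with hy
  have hyJ : ∀ n ∈ S, y n ∈ J := by intro n hn; simp only [hy, dif_pos hn]; exact hgJ n hn
  have hyf : ∀ n ∈ S, f (y n) = n := by intro n hn; simp only [hy, dif_pos hn]; exact hgf n hn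
  -- disjointness of balls
  have hdisj : S.PairwiseDisjoint (fun n => ball (x (y n)) a) := by
    intro n hn m hm hnm
    have h1 : y n ∈ I := (hyJ n hn).1
    have h2 : y m ∈ I := (hyJ m hm).1
    have hsep' : 2 * a ≤ |y n - y m| := by
      apply hsep _ (hyJ n hn) _ (hyJ m hm)
      rw [hyf n hn, hyf m hm]; exact hnm
    have hdd : a + a ≤ dist (x (y n)) (x (y m)) := by
      rw [dist_eq_norm]
      calc a + a = 2 * a := by ring
        _ ≤ |y n - y m| := hsep'
        _ = |‖x (y n)‖ - ‖x (y m)‖| := by rw [hnorm _ h1, hnorm _ h2]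
        _ ≤ ‖x (y n) - x (y m)‖ := abs_norm_sub_norm_le _ _
    exact ball_disjoint_ball hdd
  -- lower bound on union volume
  have hUsub : (⋃ n ∈ S, ball (x (y n)) a) ⊆ ⋃ t ∈ I, ball (x t) (d * ε) := by
    refine iUnion₂_subset fun n hn => ?_
    exact subset_iUnion₂_of_subset (y n) (hyJ n hn).1 (by rw [← ha'])
  have hUvol : (∑' n : S, ENNReal.ofReal (2 * a ^ 2)) ≤
      volume (⋃ t ∈ I, ball (x t) (d * ε)) := by
    refine le_trans ?_ (measure_mono hUsub)
    rw [measure_biUnion hSc hdisj (fun n _ => measurableSet_ball)]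
    exact ENNReal.tsum_le_tsum fun n => ball_vol_lb _ _ ha
  -- upper bound on volume of J
  have hJvol : volume J ≤ ∑' n : S, ENNReal.ofReal (2 * a) := by
    have hJsub : J ⊆ ⋃ n ∈ S, Ico (δ + 2 * a * n) (δ + 2 * a * n + 2 * a) := by
      intro t ht
      refine mem_iUnion₂_of_mem (mem_image_of_mem f ht) ?_
      exact ⟨(hcell t).1, (hcell t).2⟩
    refine le_trans (measure_mono hJsub) (le_trans (measure_biUnion_le _ hSc _) ?_)
    refine ENNReal.tsum_le_tsum fun n => ?_
    rw [Real.volume_Ico]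
    exact ENNReal.ofReal_le_ofReal (le_of_eq (by ring))
  -- combine
  have hkey : ENNReal.ofReal a * ENNReal.ofReal (r / 4) ≤
      volume (⋃ t ∈ I, ball (x t) (d * ε)) := by
    refine le_trans ?_ hUvol
    have e1 : ∀ n : S, ENNReal.ofReal (2 * a ^ 2) = ENNReal.ofReal a * ENNReal.ofReal (2 * a) := by
      intro n
      rw [← ENNReal.ofReal_mul ha.le]
      congr 1; ring
    calc ENNReal.ofReal a * ENNReal.ofReal (r / 4)
        ≤ ENNReal.ofReal a * volume J := by gcongr
      _ ≤ ENNReal.ofReal a * ∑' n : S, ENNReal.ofReal (2 * a) := by gcongr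
      _ = ∑' n : S, ENNReal.ofReal a * ENNReal.ofReal (2 * a) := (ENNReal.tsum_mul_left).symm
      _ = ∑' n : S, ENNReal.ofReal (2 * a ^ 2) := by exact tsum_congr fun n => (e1 n).symm
  refine le_trans (le_of_eq ?_) hkey
  rw [← ENNReal.ofReal_mul ha.le]
  congr 1
  rw [ha']
  ring
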